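/- arXiv:math/0601538 — 2 statements merged into one kernel-verified Lean document; each statement's English description precedes it below -/
import Mathlib

section
/- Let R be a commutative noetherian local ring and M a finitely generated R-module of rank r (i.e., M_p is free of rank r over R_p for every associated prime p of R, equivalently U^{-1}M is free of rank r over U^{-1}R where U is the set of nonzerodivisors). Then the minimal number of generators of M satisfies β_0^R(M) ≥ r, with equality if and only if M is free. -/
open CategoryTheory Opposite IsLocalRing

noncomputable section

universe u

variable (R : Type u) [CommRing R]

/-- The minimal number of generators of a module. -/
def nGens (M : Type u) [AddCommGroup M] [Module R M] : ℕ :=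
  sInf {n | ∃ s : Finset M, s.card = n ∧ Submodule.span R (s : Set M) = ⊤}

/-- The length of a module, i.e. the length of a longest chain of submodules,
as a natural number (junk value `0` if infinite). -/
def lengthNat (M : Type u) [AddCommGroup M] [Module R M] : ℕ :=
  ((Order.krullDim (Submodule R M)).unbotD 0).toNat

/-- `M` has rank `r`: the localization of `M` at the set of nonzerodivisors of `R`
is free of rank `r`. -/
def HasRank (M : Type u) [AddCommGroup M] [Module R M] (r : ℕ) : Prop :=
  Nonempty (LocalizedModule (nonZeroDivisors R) M ≃ₗ[Localization (nonZeroDivisors R)]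
    (Fin r → Localization (nonZeroDivisors R)))

/-- A finitely generated module `G` is totally reflexive if the biduality map
`G → G^{**}` is bijective and `Ext^i(G, R) = 0 = Ext^i(G^*, R)` for all `i ≥ 1`. -/
def IsTotallyReflexive (M : Type u) [AddCommGroup M] [Module R M] : Prop :=
  Module.Finite R M ∧ Function.Bijective (Module.Dual.eval R M) ∧
  (∀ i : ℕ, 0 < i →
    Subsingleton (((Ext R (ModuleCat.{u} R) i).obj (op (ModuleCat.of R M))).obj
      (ModuleCat.of R R))) ∧
  (∀ i : ℕ, 0 < i →
    Subsingleton (((Ext R (ModuleCat.{u} R) i).obj (op (ModuleCat.of R (Module.Dual R M)))).obj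
      (ModuleCat.of R R)))

/-- A resolution of a module `M`: a nonnegatively graded chain complex together with
an augmentation map to `M` making the augmented complex exact. -/
structure Resolution (M : Type u) [AddCommGroup M] [Module R M] where
  C : ChainComplex (ModuleCat.{u} R) ℕ
  aug : C.X 0 →ₗ[R] M
  aug_surj : Function.Surjective aug
  exact_zero : Function.Exact (C.d 1 0) aug
  exact_succ : ∀ n : ℕ, Function.Exact (C.d (n + 2) (n + 1)) (C.d (n + 1) n)

namespace Resolution

variable {R}
variable {M : Type u} [AddCommGroup M] [Module R M]

/-- A resolution is bounded if its modules vanish in all high degrees. -/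
def IsBounded (P : Resolution R M) : Prop := ∃ N : ℕ, ∀ n, N < n → Subsingleton (P.C.X n)

/-- A resolution has length at most `i` if its modules vanish in degrees above `i`. -/
def LengthLE (P : Resolution R M) (i : ℕ) : Prop := ∀ n, i < n → Subsingleton (P.C.X n)

/-- A G-resolution: all modules in the resolution are totally reflexive. -/
def IsG (P : Resolution R M) : Prop := ∀ n, IsTotallyReflexive R (P.C.X n)

/-- A resolution by finitely generated free modules. -/
def IsFiniteFree (P : Resolution R M) : Prop :=
  ∀ n, Module.Free R (P.C.X n) ∧ Module.Finite R (P.C.X n)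

/-- A strict G-resolution: degree `0` is totally reflexive and all positive degrees are
finitely generated free. -/
def IsStrict (P : Resolution R M) : Prop :=
  IsTotallyReflexive R (P.C.X 0) ∧
    ∀ n : ℕ, Module.Free R (P.C.X (n + 1)) ∧ Module.Finite R (P.C.X (n + 1))

/-- Minimality of a resolution over a local ring: each differential maps into
`m` times the next module. -/
def IsMinimal [IsLocalRing R] (P : Resolution R M) : Prop :=
  ∀ n : ℕ, LinearMap.range (P.C.d (n + 1) n).hom ≤
    (maximalIdeal R) • (⊤ : Submodule R (P.C.X n))

/-- A resolution is proper if `Hom(H, -)` applied to the augmented resolution is exact for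
every totally reflexive module `H`. -/
def IsProper (P : Resolution R M) : Prop :=
  ∀ (H : Type u) [AddCommGroup H] [Module R H], IsTotallyReflexive R H →
    (Function.Surjective (fun g : H →ₗ[R] P.C.X 0 => P.aug ∘ₗ g)) ∧
    Function.Exact (fun g : H →ₗ[R] P.C.X 1 => ((P.C.d 1 0).hom : P.C.X 1 →ₗ[R] P.C.X 0) ∘ₗ g)
      (fun g : H →ₗ[R] P.C.X 0 => P.aug ∘ₗ g) ∧
    ∀ n : ℕ, Function.Exact
      (fun g : H →ₗ[R] P.C.X (n + 2) =>
        ((P.C.d (n + 2) (n + 1)).hom : P.C.X (n + 2) →ₗ[R] P.C.X (n + 1)) ∘ₗ g)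
      (fun g : H →ₗ[R] P.C.X (n + 1) =>
        ((P.C.d (n + 1) n).hom : P.C.X (n + 1) →ₗ[R] P.C.X n) ∘ₗ g)

end Resolution

/-- `M` has finite projective dimension: it admits a bounded resolution by finitely
generated free modules. -/
def HasFinitePD (M : Type u) [AddCommGroup M] [Module R M] : Prop :=
  ∃ P : Resolution R M, P.IsFiniteFree ∧ P.IsBounded

/-- `M` has finite G-dimension: it admits a bounded G-resolution. -/
def HasFiniteGDim (M : Type u) [AddCommGroup M] [Module R M] : Prop :=
  ∃ P : Resolution R M, P.IsG ∧ P.IsBounded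

/-- `G-dim M ≤ i`. -/
def GDimLE (M : Type u) [AddCommGroup M] [Module R M] (i : ℕ) : Prop :=
  ∃ P : Resolution R M, P.IsG ∧ P.LengthLE i

section Betti

variable [IsLocalRing R]

/-- Precomposition with `f`, on homomorphisms into the residue field. -/
def homRes {A B : ModuleCat.{u} R} (f : A ⟶ B) :
    (B →ₗ[R] ResidueField R) →ₗ[ResidueField R] (A →ₗ[R] ResidueField R) where
  toFun g := g ∘ₗ (f.hom : A →ₗ[R] B)
  map_add' g₁ g₂ := by ext; rfl
  map_smul' c g := by ext; rfl

/-- The `n`-th Betti number of a complex `C`, defined as the dimension over the residue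
field of the `n`-th cohomology of `Hom(C, k)`.  Applied to a proper G-resolution of `M`,
this is the `n`-th relative Betti number `β^G_n(M)` of Avramov–Martsinkovsky; applied to a
free resolution of `M` it is the classical Betti number `β_n(M)`. -/
def gBetti (C : ChainComplex (ModuleCat.{u} R) ℕ) : ℕ → ℕ
  | 0 => Module.finrank (ResidueField R) (LinearMap.ker (homRes R (C.d 1 0)))
  | (n + 1) => Module.finrank (ResidueField R)
      (@HasQuotient.Quotient (LinearMap.ker (homRes R (C.d (n + 2) (n + 1)))) _ Submodule.hasQuotient
        ((LinearMap.range (homRes R (C.d (n + 1) n))).comap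
          (LinearMap.ker (homRes R (C.d (n + 2) (n + 1)))).subtype))

/-- The Euler characteristic of (the Betti numbers of) a complex:
`χ = Σ_n (-1)^n β_n`. -/
def gChi (C : ChainComplex (ModuleCat.{u} R) ℕ) : ℤ :=
  ∑ᶠ n : ℕ, (-1 : ℤ) ^ n * (gBetti R C n : ℤ)

/-- The `i`-th partial Euler characteristic of a complex: `χ_i = Σ_{n ≥ i} (-1)^{n-i} β_n`. -/
def gChiAt (C : ChainComplex (ModuleCat.{u} R) ℕ) (i : ℕ) : ℤ :=
  ∑ᶠ n : ℕ, if i ≤ n then (-1 : ℤ) ^ (n - i) * (gBetti R C n : ℤ) else 0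

end Betti

end





open Submodule in
private lemma span_top_localized
    {R : Type u} [CommRing R] {M : Type u} [AddCommGroup M] [Module R M]
    {r n : ℕ}
    (e : LocalizedModule (nonZeroDivisors R) M ≃ₗ[Localization (nonZeroDivisors R)]
      (Fin r → Localization (nonZeroDivisors R)))
    (g : Fin n → M) (hg : Submodule.span R (Set.range g) = ⊤) :
    Submodule.span (Localization (nonZeroDivisors R))
      (Set.range fun i => e (LocalizedModule.mkLinearMap (nonZeroDivisors R) M (g i))) = ⊤ := by
  set A := Localization (nonZeroDivisors R)
  set ℓ := LocalizedModule.mkLinearMap (nonZeroDivisors R) M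
  have h1 : Submodule.span A (ℓ '' Set.range g) = ⊤ :=
    span_eq_top_of_isLocalizedModule A (nonZeroDivisors R) ℓ hg
  have h2 : (Set.range fun i => e (ℓ (g i))) = e '' (ℓ '' Set.range g) := by
    rw [← Set.range_comp, ← Set.range_comp]
    rfl
  rw [h2, ← LinearEquiv.coe_coe, ← Submodule.map_span, h1, Submodule.map_top]
  exact LinearEquiv.range e

/-- If `M` is a finitely generated module of rank `r` over a commutative noetherian local
ring, then `β₀(M) ≥ r`, with equality if and only if `M` is free. -/
theorem rank_le_nGens_and_eq_iff_free
    (R : Type u) [CommRing R] [IsNoetherianRing R] [IsLocalRing R]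
    (M : Type u) [AddCommGroup M] [Module R M] [Module.Finite R M]
    (r : ℕ) (hr : HasRank R M r) :
    r ≤ nGens R M ∧ (nGens R M = r ↔ Module.Free R M) := by
  classical
  set A := Localization (nonZeroDivisors R) with hA
  set ℓ := LocalizedModule.mkLinearMap (nonZeroDivisors R) M with hℓ
  obtain ⟨e⟩ := hr
  haveI : Nontrivial A := IsFractionRing.nontrivial R A
  have key : ∀ (n : ℕ) (g : Fin n → M), Submodule.span R (Set.range g) = ⊤ →
      Function.Surjective (Fintype.linearCombination A (fun i => e (ℓ (g i)))) := by
    intro n g hg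
    rw [← LinearMap.range_eq_top, Fintype.range_linearCombination]
    exact span_top_localized e g hg
  have hle : ∀ (n : ℕ) (g : Fin n → M), Submodule.span R (Set.range g) = ⊤ → r ≤ n := by
    intro n g hg
    have h := LinearMap.rank_le_of_surjective _ (key n g hg)
    rw [rank_fin_fun, rank_fin_fun] at h
    exact_mod_cast h
  have hmem : nGens R M ∈ {n | ∃ s : Finset M, s.card = n ∧
      Submodule.span R (s : Set M) = ⊤} := by
    apply Nat.sInf_mem
    obtain ⟨s, hs⟩ := Module.Finite.fg_top (R := R) (M := M)
    exact ⟨s.card, s, rfl, hs⟩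
  obtain ⟨t, htc, hts⟩ := hmem
  let g : Fin t.card → M := fun i => (t.equivFin.symm i : M)
  have hg : Set.range g = (t : Set M) := by
    ext x
    constructor
    · rintro ⟨i, rfl⟩
      exact (t.equivFin.symm i).2
    · intro hx
      exact ⟨t.equivFin ⟨x, hx⟩, by simp [g]⟩
  have hgs : Submodule.span R (Set.range g) = ⊤ := by rw [hg]; exact hts
  have h1 : r ≤ nGens R M := htc ▸ hle t.card g hgs
  refine ⟨h1, ?_, ?_⟩
  · -- nGens = r → free
    intro hn
    have hcard : t.card = r := htc.trans hn
    subst hcard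
    set φ := Fintype.linearCombination R g with hφ
    have hφs : Function.Surjective φ := by
      rw [← LinearMap.range_eq_top, hφ, Fintype.range_linearCombination, hgs]
    set σ := Fintype.linearCombination A (fun i => e (ℓ (g i))) with hσ
    have hσinj : Function.Injective σ :=
      OrzechProperty.injective_of_surjective_endomorphism σ (key _ g hgs)
    have hφinj : Function.Injective φ := by
      rw [← LinearMap.ker_eq_bot, LinearMap.ker_eq_bot']
      intro x hx
      have hcomm : σ (fun i => algebraMap R A (x i)) = e (ℓ (φ x)) := by
        rw [hσ, hφ, Fintype.linearCombination_apply, Fintype.linearCombination_apply,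
          map_sum, map_sum]
        refine Finset.sum_congr rfl fun i _ => ?_
        rw [LinearMap.map_smul, ← algebraMap_smul A (x i) (ℓ (g i)), map_smul]
      have hz : σ (fun i => algebraMap R A (x i)) = σ 0 := by
        rw [hcomm, hx, map_zero, map_zero, map_zero]
      have hz2 := hσinj hz
      funext j
      have hcj : algebraMap R A (x j) = 0 := congrFun hz2 j
      refine IsFractionRing.injective R A ?_
      rw [Pi.zero_apply, map_zero]
      exact hcj
    exact Module.Free.of_equiv (LinearEquiv.ofBijective φ ⟨hφinj, hφs⟩)
  · -- free → nGens = r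
    intro hF
    haveI := hF
    set ι := Module.Free.ChooseBasisIndex R M
    set b := Module.Free.chooseBasis R M with hb
    have b2 : Module.Basis ι A (Fin r → A) :=
      (b.ofIsLocalizedModule A (nonZeroDivisors R) ℓ).map e
    have hcard : Fintype.card ι = r := by
      have h := Module.finrank_eq_card_basis b2
      rw [Module.finrank_fin_fun] at h
      exact h.symm
    have hub : nGens R M ≤ r := by
      rw [← hcard]
      apply Nat.sInf_le
      refine ⟨Finset.univ.image b, ?_, ?_⟩
      · rw [Finset.card_image_of_injective _ b.injective, Finset.card_univ]
      · rw [Finset.coe_image, Finset.coe_univ, Set.image_univ, b.span_eq]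
    exact le_antisymm hub h1
end

section
/- Let R be a commutative noetherian local ring and M a finitely generated R-module of finite projective dimension. Then χ(M) = 0 if and only if Ann_R(M) contains an R-regular element (a nonzerodivisor of R). -/
open CategoryTheory Opposite IsLocalRing

/-! ### Auxiliary lemmas -/

section EulerAux

open IsLocalRing TensorProduct

namespace EulerAux

universe v

variable {A : Type v} [CommRing A] [IsLocalRing A]

lemma socle_smul_eq_zero {x : A} (hxm : ∀ a ∈ maximalIdeal A, a * x = 0)
    {G : Type v} [AddCommGroup G] [Module A G] {w : G}
    (hw : w ∈ (maximalIdeal A • ⊤ : Submodule A G)) : x • w = 0 := by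
  refine Submodule.smul_induction_on hw (fun a ha g _ => ?_) (fun g h hg hh => by
    rw [smul_add, hg, hh, add_zero])
  rw [smul_smul, mul_comm, hxm a ha, zero_smul]

lemma key_mem_smul {x : A} (hx : x ≠ 0) (hxm : ∀ a ∈ maximalIdeal A, a * x = 0)
    {F G : Type v} [AddCommGroup F] [Module A F] [AddCommGroup G] [Module A G]
    [Module.Free A F] [Module.Finite A F]
    (f : F →ₗ[A] G) (hf : Function.Injective f)
    {v : F} (hv : f v ∈ (maximalIdeal A • ⊤ : Submodule A G)) :
    v ∈ (maximalIdeal A • ⊤ : Submodule A F) := by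
  by_contra hvm
  let b := Module.Free.chooseBasis A F
  have hex : ∃ i, b.repr v i ∉ maximalIdeal A := by
    by_contra hall
    push_neg at hall
    apply hvm
    rw [← b.sum_repr v]
    exact Submodule.sum_mem _ fun i _ =>
      Submodule.smul_mem_smul (hall i) Submodule.mem_top
  obtain ⟨i, hi⟩ := hex
  have hunit : IsUnit (b.repr v i) := by
    by_contra hu
    exact hi ((IsLocalRing.mem_maximalIdeal _).mpr hu)
  have hxv : x • v = 0 := hf (by
    rw [map_smul, socle_smul_eq_zero hxm hv, map_zero])
  have : x * b.repr v i = 0 := by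
    have := congrArg (fun w => b.repr w i) hxv
    simpa using this
  exact hx (by
    obtain ⟨u, hu⟩ := hunit
    have := congrArg (fun t => t * (↑u⁻¹ : A)) this
    simpa [mul_comm, mul_assoc, ← hu] using this)

lemma lTensor_injective_of_socle
    {F G : Type v} [AddCommGroup F] [Module A F] [AddCommGroup G] [Module A G]
    [Module.Free A F] [Module.Finite A F]
    (f : F →ₗ[A] G)
    (key : ∀ v : F, f v ∈ (maximalIdeal A • ⊤ : Submodule A G) →
      v ∈ (maximalIdeal A • ⊤ : Submodule A F)) :
    Function.Injective (f.lTensor (ResidueField A)) := by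
  set I := maximalIdeal A
  let eF : (ResidueField A) ⊗[A] F ≃ₗ[A] F ⧸ (I • ⊤ : Submodule A F) :=
    quotTensorEquivQuotSMul F I
  let eG : (ResidueField A) ⊗[A] G ≃ₗ[A] G ⧸ (I • ⊤ : Submodule A G) :=
    quotTensorEquivQuotSMul G I
  have hle : (I • ⊤ : Submodule A F) ≤ (I • ⊤ : Submodule A G).comap f := by
    intro v hv
    refine Submodule.smul_induction_on hv (fun a ha g _ => ?_) (fun g h hg hh => ?_)
    · simp only [Submodule.mem_comap, map_smul]
      exact Submodule.smul_mem_smul ha Submodule.mem_top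
    · simp only [Submodule.mem_comap, map_add] at hg hh ⊢
      exact Submodule.add_mem _ hg hh
  let φ : (F ⧸ (I • ⊤ : Submodule A F)) →ₗ[A] (G ⧸ (I • ⊤ : Submodule A G)) :=
    Submodule.mapQ _ _ f hle
  have hφ : Function.Injective φ := by
    rw [← LinearMap.ker_eq_bot, eq_bot_iff]
    rintro v hv
    obtain ⟨v, rfl⟩ := Submodule.Quotient.mk_surjective _ v
    simp only [LinearMap.mem_ker, Submodule.mapQ_apply, φ] at hv
    rw [Submodule.Quotient.mk_eq_zero] at hv
    simpa [Submodule.Quotient.mk_eq_zero] using key v hv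
  have hcomm : (eG.toLinearMap ∘ₗ f.lTensor (ResidueField A)) = φ ∘ₗ eF.toLinearMap := by
    apply TensorProduct.ext'
    intro r v
    obtain ⟨r, rfl⟩ := Ideal.Quotient.mk_surjective (I := I) r
    simp only [LinearMap.coe_comp, Function.comp_apply, LinearMap.lTensor_tmul,
      LinearEquiv.coe_coe, eF, eG]
    erw [quotTensorEquivQuotSMul_mk_tmul I r (f v), quotTensorEquivQuotSMul_mk_tmul I r v]
    simp [φ, Submodule.mapQ_apply]
  have hinj : Function.Injective (eG.toLinearMap ∘ₗ f.lTensor (ResidueField A)) := by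
    rw [hcomm]
    simp only [LinearMap.coe_comp, LinearEquiv.coe_coe]
    exact hφ.comp eF.injective
  exact fun a b h => hinj (by simp [LinearMap.comp_apply, h])

/-- Over a local ring with a nonzero socle element, a SES `0 → F → G → C → 0` with `F, G`
finite free has `C` free finite of complementary rank. -/
lemma quot_free {x : A} (hx : x ≠ 0) (hxm : ∀ a ∈ maximalIdeal A, a * x = 0)
    {F G C : Type v} [AddCommGroup F] [Module A F] [AddCommGroup G] [Module A G]
    [AddCommGroup C] [Module A C]
    [Module.Free A F] [Module.Finite A F] [Module.Free A G] [Module.Finite A G]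
    (f : F →ₗ[A] G) (g : G →ₗ[A] C) (hf : Function.Injective f)
    (hg : Function.Surjective g) (hfg : Function.Exact f g) :
    Module.Free A C ∧ Module.Finite A C ∧
      Module.finrank A F + Module.finrank A C = Module.finrank A G := by
  have hfin : Module.Finite A C := Module.Finite.of_surjective g hg
  have hinj : Function.Injective (f.lTensor (ResidueField A)) :=
    lTensor_injective_of_socle f (fun v hv => key_mem_smul hx hxm f hf hv)
  obtain ⟨f', hf'⟩ := (IsLocalRing.split_injective_iff_lTensor_residueField_injective f).mpr hinj
  have hfree : Module.Free A C := Module.free_of_lTensor_residueField_injective f g hg hfg hinj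
  refine ⟨hfree, hfin, ?_⟩
  have hf'f : ∀ v : F, f' (f v) = v := fun v => by
    simpa using DFunLike.congr_fun hf' v
  have hbij : Function.Bijective (LinearMap.prod f' g) := by
    constructor
    · intro w w' hww'
      have h1 : f' w = f' w' := congrArg Prod.fst hww'
      have h2 : g w = g w' := congrArg Prod.snd hww'
      have hz : g (w - w') = 0 := by rw [map_sub, h2, sub_self]
      obtain ⟨v, hv⟩ := (hfg (w - w')).mp hz
      have hz' : f' (w - w') = 0 := by rw [map_sub, h1, sub_self]
      rw [← hv, hf'f] at hz'
      subst hz'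
      rw [map_zero] at hv
      exact sub_eq_zero.mp hv.symm
    · rintro ⟨v, c⟩
      obtain ⟨w₀, hw₀⟩ := hg c
      refine ⟨w₀ + f (v - f' w₀), ?_⟩
      have hgf : ∀ u, g (f u) = 0 := fun u => (hfg _).mpr ⟨u, rfl⟩
      simp [LinearMap.prod_apply, hf'f, hw₀, hgf, Prod.ext_iff]
  let e : G ≃ₗ[A] F × C := LinearEquiv.ofBijective _ hbij
  have := e.finrank_eq
  rw [this, Module.finrank_prod]

lemma subsingleton_of_finrank_zero {M : Type v} [AddCommGroup M] [Module A M]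
    [Module.Free A M] [Module.Finite A M] (h : Module.finrank A M = 0) :
    Subsingleton M := by
  have hcard := Module.finrank_eq_card_chooseBasisIndex A M
  rw [h] at hcard
  haveI : IsEmpty (Module.Free.ChooseBasisIndex A M) :=
    Fintype.card_eq_zero_iff.mp hcard.symm
  let b := Module.Free.chooseBasis A M
  refine ⟨fun m n => b.repr.injective ?_⟩
  ext i
  exact isEmptyElim i

end EulerAux

namespace EulerAux

variable {R : Type u} [CommRing R]

lemma subsingleton_localizedModule {M : Type u} [AddCommGroup M] [Module R M]
    [h : Subsingleton M] (S : Submonoid R) : Subsingleton (LocalizedModule S M) :=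
  LocalizedModule.subsingleton_iff.mpr fun m => ⟨1, S.one_mem, by
    rw [Subsingleton.elim m 0, smul_zero]⟩

lemma assPrimes_subset_union {M : Type u} [AddCommGroup M] [Module R M]
    (N : Submodule R M) :
    associatedPrimes R M ⊆ associatedPrimes R N ∪ associatedPrimes R (M ⧸ N) :=
  associatedPrimes.subset_union_of_exact (f := N.subtype) (g := N.mkQ) N.injective_subtype
    (LinearMap.exact_subtype_mkQ N)

lemma assPrimes_quot_finite [IsNoetherianRing R] (N : Ideal R) :
    (associatedPrimes R (R ⧸ N)).Finite :=
  associatedPrimes.finite R (R ⧸ N)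

lemma assPrimes_finite [IsNoetherianRing R] : (associatedPrimes R R).Finite := by
  have e : (R ⧸ (⊥ : Ideal R)) ≃ₗ[R] R := Submodule.quotEquivOfEqBot ⊥ rfl
  rw [← LinearEquiv.AssociatedPrimes.eq e]
  exact assPrimes_quot_finite ⊥

lemma exists_assPrime_le [IsNoetherianRing R] {I : Ideal R}
    (hI : ∀ a ∈ I, ∃ z : R, z ≠ 0 ∧ z * a = 0) :
    ∃ p ∈ associatedPrimes R R, I ≤ p := by
  have hfin : (associatedPrimes R R).Finite := assPrimes_finite
  have hsub : (I : Set R) ⊆ ⋃ p ∈ hfin.toFinset, ((p : Ideal R) : Set R) := by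
    intro a ha
    obtain ⟨z, hz0, hza⟩ := hI a ha
    have hmem : a ∈ ⋃ p ∈ associatedPrimes R R, ((p : Ideal R) : Set R) := by
      rw [biUnion_associatedPrimes_eq_zero_divisors]
      exact ⟨z, hz0, by simpa [mul_comm] using hza⟩
    simp only [Set.mem_iUnion, SetLike.mem_coe, exists_prop, Set.Finite.mem_toFinset] at hmem ⊢
    exact hmem
  have hprime : ∀ q ∈ hfin.toFinset, q ≠ (⊥ : Ideal R) → q ≠ (⊥ : Ideal R) →
      (q : Ideal R).IsPrime := fun q hq _ _ => (hfin.mem_toFinset.mp hq).isPrime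
  obtain ⟨p, hps, hIp⟩ := (Ideal.subset_union_prime (⊥ : Ideal R) (⊥ : Ideal R) hprime).mp hsub
  exact ⟨p, hfin.mem_toFinset.mp hps, hIp⟩

end EulerAux

end EulerAux



section ChiAux

open IsLocalRing

namespace EulerAux

variable {R : Type u} [CommRing R]

lemma exact_of_subtype_codRestrict {A : Type u} [CommRing A]
    {G₂ G₁ : Type u} [AddCommGroup G₂] [Module A G₂] [AddCommGroup G₁] [Module A G₁]
    (d : G₂ →ₗ[A] G₁) (P : Submodule A G₂) (Q : Submodule A G₁)
    (hker : LinearMap.ker d = P) (hmem : ∀ v, d v ∈ Q) :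
    Function.Injective P.subtype ∧
    Function.Exact P.subtype (d.codRestrict Q hmem) := by
  refine ⟨Subtype.val_injective, fun y => ?_⟩
  constructor
  · intro hy
    have : d y = 0 := congrArg Subtype.val hy
    exact ⟨⟨y, hker ▸ this⟩, rfl⟩
  · rintro ⟨⟨c, hc⟩, rfl⟩
    have : d c = 0 := by rw [← hker] at hc; exact hc
    exact Subtype.ext this

lemma chi_eq [IsNoetherianRing R] {M : Type u} [AddCommGroup M] [Module R M]
    (F : Resolution R M) (hfree : F.IsFiniteFree) (T : ℕ)
    (hT : ∀ n, T < n → Subsingleton (F.C.X n))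
    {p : Ideal R} [p.IsPrime] (hp : IsAssociatedPrime p R) :
    Module.Free (Localization.AtPrime p) (LocalizedModule p.primeCompl M) ∧
    Module.Finite (Localization.AtPrime p) (LocalizedModule p.primeCompl M) ∧
    (∑ᶠ n : ℕ, (-1 : ℤ) ^ n * (Module.finrank R (F.C.X n) : ℤ))
      = (Module.finrank (Localization.AtPrime p) (LocalizedModule p.primeCompl M) : ℤ) := by
  classical
  obtain ⟨hpr, z, hz⟩ := isAssociatedPrime_iff.mp hp
  haveI := hpr
  set S := p.primeCompl with hS
  set A := Localization.AtPrime p with hA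
  -- the socle element
  set x : A := algebraMap R A z with hxdef
  have hx : x ≠ 0 := by
    intro h
    obtain ⟨m, hm⟩ := (IsLocalization.map_eq_zero_iff S A z).mp h
    refine m.2 ?_
    rw [hz]
    exact Submodule.mem_colon_singleton.mpr (by simpa using hm)
  have hxm : ∀ a ∈ maximalIdeal A, a * x = 0 := by
    have hmap : Ideal.map (algebraMap R A) p = maximalIdeal A :=
      Localization.AtPrime.map_eq_maximalIdeal
    intro a ha
    rw [← hmap] at ha
    have hle : Ideal.map (algebraMap R A) p ≤
        LinearMap.ker (LinearMap.toSpanSingleton A A x) := by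
      rw [Ideal.map_le_iff_le_comap]
      intro y hy
      simp only [Ideal.mem_comap, LinearMap.mem_ker, LinearMap.toSpanSingleton_apply]
      rw [smul_eq_mul, hxdef, ← map_mul]
      have hyz : y * z = 0 := by
        have hy' : y ∈ (⊥ : Submodule R R).colon {z} := by rw [← hz]; exact hy
        simpa [smul_eq_mul] using Submodule.mem_colon_singleton.mp hy'
      rw [hyz, map_zero]
    have := hle ha
    simpa [LinearMap.toSpanSingleton_apply, smul_eq_mul] using this
  -- the localized complex
  have hYfree : ∀ n, Module.Free A (LocalizedModule S (F.C.X n)) := fun n =>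
    letI := (hfree n).1
    Module.free_of_isLocalizedModule S (LocalizedModule.mkLinearMap S (F.C.X n))
  have hYfin : ∀ n, Module.Finite A (LocalizedModule S (F.C.X n)) := fun n =>
    letI := (hfree n).2
    Module.Finite.of_isLocalizedModule S (LocalizedModule.mkLinearMap S (F.C.X n))
  set r : ℕ → ℕ := fun n => Module.finrank A (LocalizedModule S (F.C.X n)) with hrdef
  have hr : ∀ n, Module.finrank R (F.C.X n) = r n := fun n => by
    letI := (hfree n).1
    exact (Module.finrank_of_isLocalizedModule_of_free A S
      (LocalizedModule.mkLinearMap S (F.C.X n))).symm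
  have hrT : ∀ n, T < n → r n = 0 := fun n hn => by
    haveI := hT n hn
    haveI : Subsingleton (LocalizedModule S (F.C.X n)) := subsingleton_localizedModule S
    exact Module.finrank_zero_of_subsingleton
  set D : ∀ n : ℕ, LocalizedModule S (F.C.X (n+1)) →ₗ[A] LocalizedModule S (F.C.X n) :=
    fun n => ((IsLocalizedModule.map S (LocalizedModule.mkLinearMap S (F.C.X (n+1)))
      (LocalizedModule.mkLinearMap S (F.C.X n))
      (F.C.d (n+1) n).hom).extendScalarsOfIsLocalization S A)
    with hD
  have hDexact : ∀ n, Function.Exact (D (n+1)) (D n) := fun n =>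
    IsLocalizedModule.map_exact S (LocalizedModule.mkLinearMap S (F.C.X (n+2)))
      (LocalizedModule.mkLinearMap S (F.C.X (n+1))) (LocalizedModule.mkLinearMap S (F.C.X n))
      _ _ (F.exact_succ n)
  set aug : LocalizedModule S (F.C.X 0) →ₗ[A] LocalizedModule S M :=
    ((IsLocalizedModule.map S (LocalizedModule.mkLinearMap S (F.C.X 0))
      (LocalizedModule.mkLinearMap S M) F.aug).extendScalarsOfIsLocalization S A) with haug
  have haugexact : Function.Exact (D 0) aug :=
    IsLocalizedModule.map_exact S (LocalizedModule.mkLinearMap S (F.C.X 1))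
      (LocalizedModule.mkLinearMap S (F.C.X 0)) (LocalizedModule.mkLinearMap S M)
      _ _ F.exact_zero
  have haugsurj : Function.Surjective aug :=
    IsLocalizedModule.map_surjective S (LocalizedModule.mkLinearMap S (F.C.X 0))
      (LocalizedModule.mkLinearMap S M) F.aug F.aug_surj
  -- kernels
  set K : ∀ j : ℕ, Submodule A (LocalizedModule S (F.C.X (j+1))) :=
    fun j => LinearMap.ker (D j) with hK
  -- main downward induction
  have main : ∀ m j, T ≤ j + m → Module.Free A (K j) ∧ Module.Finite A (K j) ∧
      ((Module.finrank A (K j) : ℤ)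
        = ∑ q ∈ Finset.range (T + 1 - j), (-1 : ℤ) ^ q * (r (j + 2 + q) : ℤ)) := by
    intro m
    induction m with
    | zero =>
      intro j hj
      simp only [Nat.add_zero] at hj
      haveI : Subsingleton (LocalizedModule S (F.C.X (j+1))) := by
        haveI := hT (j+1) (by omega)
        exact subsingleton_localizedModule S
      haveI : Subsingleton (K j) := by infer_instance
      refine ⟨inferInstance, Module.Finite.of_surjective (0 : A →ₗ[A] K j)
        (fun m => ⟨0, Subsingleton.elim _ _⟩), ?_⟩
      rw [Module.finrank_zero_of_subsingleton]
      symm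
      rw [Finset.sum_eq_zero]
      · rfl
      · intro q hq
        rw [hrT (j + 2 + q) (by omega)]
        simp
    | succ m IH =>
      intro j hj
      by_cases hcase : T ≤ j + m
      · exact IH j hcase
      · have hjT : j < T := by omega
        obtain ⟨ihfree, ihfin, ihrank⟩ := IH (j+1) (by omega)
        letI := ihfree
        letI := ihfin
        letI := hYfree (j+2)
        letI := hYfin (j+2)
        have hmem : ∀ v, D (j+1) v ∈ K j := fun v => (hDexact j _).mpr ⟨v, rfl⟩
        obtain ⟨hinj, hexact⟩ := exact_of_subtype_codRestrict (D (j+1)) (K (j+1)) (K j) rfl hmem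
        have hsurj : Function.Surjective ((D (j+1)).codRestrict (K j) hmem) := by
          rintro ⟨v, hv⟩
          obtain ⟨u, hu⟩ := (hDexact j v).mp hv
          exact ⟨u, Subtype.ext hu⟩
        obtain ⟨hfreeKj, hfinKj, hrank⟩ :=
          quot_free hx hxm ((K (j+1)).subtype) ((D (j+1)).codRestrict (K j) hmem)
            hinj hsurj hexact
        refine ⟨hfreeKj, hfinKj, ?_⟩
        have hrankZ : (Module.finrank A (K j) : ℤ)
            = (r (j + 2) : ℤ) - (Module.finrank A (K (j+1)) : ℤ) := by
          have h2 : Module.finrank A (K (j+1)) + Module.finrank A (K j) = r (j + 2) := hrank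
          omega
        rw [hrankZ, ihrank]
        have h1 : T + 1 - j = (T - j) + 1 := by omega
        have h2 : T + 1 - (j + 1) = T - j := by omega
        rw [h1, Finset.sum_range_succ']
        rw [h2] at *
        have h3 : ∀ q : ℕ, (-1 : ℤ) ^ (q + 1) * (r (j + 2 + (q + 1)) : ℤ)
            = -((-1 : ℤ) ^ q * (r (j + 1 + 2 + q) : ℤ)) := by
          intro q
          have : j + 2 + (q + 1) = j + 1 + 2 + q := by omega
          rw [this, pow_succ]
          ring
        rw [Finset.sum_congr rfl (fun q _ => h3 q), Finset.sum_neg_distrib]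
        push_cast
        ring
  obtain ⟨hK0free, hK0fin, hK0rank⟩ := main T 0 (by omega)
  letI := hK0free
  letI := hK0fin
  letI := hYfree 1
  letI := hYfin 1
  letI := hYfree 0
  letI := hYfin 0
  -- SES : 0 → K 0 → Y 1 → ker aug → 0
  have hmem0 : ∀ v, D 0 v ∈ LinearMap.ker aug := fun v => (haugexact _).mpr ⟨v, rfl⟩
  obtain ⟨hinj0, hexact0⟩ := exact_of_subtype_codRestrict (D 0) (K 0) (LinearMap.ker aug) rfl hmem0
  have hsurj0 : Function.Surjective ((D 0).codRestrict (LinearMap.ker aug) hmem0) := by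
    rintro ⟨v, hv⟩
    obtain ⟨u, hu⟩ := (haugexact v).mp hv
    exact ⟨u, Subtype.ext hu⟩
  obtain ⟨hKafree, hKafin, hKarank⟩ :=
    quot_free hx hxm ((K 0).subtype) ((D 0).codRestrict (LinearMap.ker aug) hmem0)
      hinj0 hsurj0 hexact0
  letI := hKafree
  letI := hKafin
  -- SES : 0 → ker aug → Y 0 → M' → 0
  have hexact1 : Function.Exact (LinearMap.ker aug).subtype aug := by
    intro y
    constructor
    · intro hy
      exact ⟨⟨y, hy⟩, rfl⟩
    · rintro ⟨⟨c, hc⟩, rfl⟩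
      exact hc
  obtain ⟨hMfree, hMfin, hMrank⟩ :=
    quot_free hx hxm ((LinearMap.ker aug).subtype) aug Subtype.val_injective haugsurj hexact1
  refine ⟨hMfree, hMfin, ?_⟩
  -- assemble the count
  have hsupp : (Function.support fun n : ℕ => (-1 : ℤ) ^ n * (Module.finrank R (F.C.X n) : ℤ))
      ⊆ ↑(Finset.range (T + 3)) := by
    intro n hn
    simp only [Function.mem_support] at hn
    simp only [Finset.coe_range, Set.mem_Iio]
    by_contra h
    apply hn
    rw [hr n, hrT n (by omega)]
    simp
  rw [finsum_eq_sum_of_support_subset _ hsupp]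
  have hrw : ∀ n ∈ Finset.range (T + 3),
      (-1 : ℤ) ^ n * (Module.finrank R (F.C.X n) : ℤ) = (-1 : ℤ) ^ n * (r n : ℤ) := by
    intro n _
    rw [hr n]
  rw [Finset.sum_congr rfl hrw]
  -- now pure arithmetic with the three rank identities
  have e1 : (Module.finrank A (LinearMap.ker aug) : ℤ)
      = (r 1 : ℤ) - (Module.finrank A (K 0) : ℤ) := by
    have h2 : Module.finrank A (K 0) + Module.finrank A (LinearMap.ker aug) = r 1 := hKarank
    omega
  have e2 : (Module.finrank A (LocalizedModule S M) : ℤ)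
      = (r 0 : ℤ) - (Module.finrank A (LinearMap.ker aug) : ℤ) := by
    have h2 : Module.finrank A (LinearMap.ker aug) + Module.finrank A (LocalizedModule S M) = r 0 := hMrank
    omega
  rw [e2, e1, hK0rank]
  have hsplit0 : ∑ n ∈ Finset.range (T + 3), (-1 : ℤ) ^ n * (r n : ℤ)
      = (∑ i ∈ Finset.range (T + 2), (-1 : ℤ) ^ (i + 1) * (r (i + 1) : ℤ)) + (r 0 : ℤ) := by
    rw [Finset.sum_range_succ']
    simp
  have hsplit1 : ∑ i ∈ Finset.range (T + 2), (-1 : ℤ) ^ (i + 1) * (r (i + 1) : ℤ)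
      = (∑ q ∈ Finset.range (T + 1), (-1 : ℤ) ^ (q + 2) * (r (q + 2) : ℤ))
        + (-1 : ℤ) ^ 1 * (r 1 : ℤ) := by
    rw [Finset.sum_range_succ']
  rw [hsplit0, hsplit1]
  have hterm : ∀ q : ℕ, (-1 : ℤ) ^ (q + 2) * (r (q + 2) : ℤ)
      = (-1 : ℤ) ^ q * (r (0 + 2 + q) : ℤ) := by
    intro q
    have h4 : q + 2 = 0 + 2 + q := by omega
    rw [pow_add]
    rw [show ((-1 : ℤ) ^ 2) = 1 by norm_num]
    rw [← h4]
    ring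
  rw [Finset.sum_congr rfl (fun q _ => hterm q)]
  have : T + 1 - 0 = T + 1 := by omega
  rw [this] at hK0rank ⊢
  ring

end EulerAux

end ChiAux


/-- Over a commutative noetherian local ring, a finitely generated module `M` of finite
projective dimension has `χ(M) = 0` if and only if `Ann_R(M)` contains a nonzerodivisor
of `R`. -/
theorem euler_characteristic_eq_zero_iff_annihilator_contains_regular
    (R : Type u) [CommRing R] [IsNoetherianRing R] [IsLocalRing R]
    (M : Type u) [AddCommGroup M] [Module R M] [Module.Finite R M]
    (F : Resolution R M) (hfree : F.IsFiniteFree) (hbdd : F.IsBounded) :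
    (∑ᶠ n : ℕ, (-1 : ℤ) ^ n * (Module.finrank R (F.C.X n) : ℤ)) = 0 ↔
      ∃ s ∈ nonZeroDivisors R, s ∈ Module.annihilator R M := by
  classical
  obtain ⟨T, hT⟩ := hbdd
  constructor
  · intro hchi
    by_contra hno
    push_neg at hno
    have hI : ∀ a ∈ Module.annihilator R M, ∃ z : R, z ≠ 0 ∧ z * a = 0 := by
      intro a ha
      have hnz : a ∉ nonZeroDivisors R := fun h => hno a h ha
      rw [mem_nonZeroDivisors_iff_right] at hnz
      push_neg at hnz
      obtain ⟨zz, h1, h2⟩ := hnz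
      exact ⟨zz, h2, h1⟩
    obtain ⟨p, hpass, hple⟩ := EulerAux.exists_assPrime_le hI
    haveI : p.IsPrime := hpass.isPrime
    obtain ⟨hfreeM, hfinM, heq⟩ := EulerAux.chi_eq F hfree T hT hpass
    rw [hchi] at heq
    have hsub : Subsingleton (LocalizedModule p.primeCompl M) := by
      letI := hfreeM; letI := hfinM
      exact EulerAux.subsingleton_of_finrank_zero (by exact_mod_cast heq.symm)
    have hmem : (⟨p, hpass.isPrime⟩ : PrimeSpectrum R) ∈ Module.support R M := by
      rw [Module.support_eq_zeroLocus]
      exact fun a ha => hple ha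
    rw [Module.mem_support_iff] at hmem
    exact (not_subsingleton_iff_nontrivial.mpr hmem) hsub
  · rintro ⟨s, hs, hsann⟩
    obtain ⟨p, hpass⟩ := associatedPrimes.nonempty R R
    haveI : p.IsPrime := hpass.isPrime
    obtain ⟨hfreeM, hfinM, heq⟩ := EulerAux.chi_eq F hfree T hT hpass
    rw [heq]
    have hsS : s ∈ p.primeCompl := by
      intro hmem
      obtain ⟨hpr, z, hz⟩ := isAssociatedPrime_iff.mp hpass
      have hz0 : z ≠ 0 := by
        rintro rfl
        exact hpr.ne_top (by rw [hz, Submodule.colon_singleton_zero])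
      have hsz : s • z = 0 := by
        have h' : s ∈ (⊥ : Submodule R R).colon {z} := by rw [← hz]; exact hmem
        simpa using Submodule.mem_colon_singleton.mp h'
      exact hz0 ((mem_nonZeroDivisors_iff_right.mp hs) z (by rw [mul_comm]; simpa [smul_eq_mul] using hsz))
    haveI hsub : Subsingleton (LocalizedModule p.primeCompl M) :=
      LocalizedModule.subsingleton_iff.mpr fun m => ⟨s, hsS, Module.mem_annihilator.mp hsann m⟩
    simp [Module.finrank_zero_of_subsingleton]
end
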